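/- Let s ∈ {0,1}^ℓ with ℓ ≥ 2 and let q = 0 (1/2)^{ℓ-1} (the character 0 followed by ℓ-1 copies of 1/2). Then d_DTW(s,q) ≥ (ℓ-1)/2, with equality if and only if s[1] = 0. -/

import Mathlib

/-- `IsExpansion x x'` : `x'` is obtained from `x` by duplicating each character an
arbitrary positive number of times. -/
def IsExpansion (x x' : List ℝ) : Prop :=
  ∃ ks : List ℕ, ks.length = x.length ∧ (∀ k ∈ ks, 0 < k) ∧
    x' = (List.zipWith (fun k (a : ℝ) => List.replicate k a) ks x).flatten

/-- The dynamic time warping distance with `ℓ₁` character cost `|a - b|`: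
the minimum over all pairs of equal-length expansions of the `ℓ₁` distance. -/
noncomputable def dtw (x y : List ℝ) : ℝ :=
  sInf { c | ∃ x' y', IsExpansion x x' ∧ IsExpansion y y' ∧ x'.length = y'.length ∧
    c = (List.zipWith (fun a b => |a - b|) x' y').sum }

lemma expansion_nil {x' : List ℝ} (h : IsExpansion [] x') : x' = [] := by
  obtain ⟨ks, hlen, _, hx⟩ := h
  simp only [List.length_nil, List.length_eq_zero_iff] at hlen
  subst hlen; simpa using hx

lemma expansion_cons {c : ℝ} {t x' : List ℝ} (h : IsExpansion (c :: t) x') :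
    ∃ k x'', 0 < k ∧ IsExpansion t x'' ∧ x' = List.replicate k c ++ x'' := by
  obtain ⟨ks, hlen, hpos, hx⟩ := h
  cases ks with
  | nil => simp at hlen
  | cons k ks =>
    exact ⟨k, _, hpos k (by simp),
      ⟨ks, by simpa using hlen, fun k hk => hpos k (by simp [hk]), rfl⟩,
      by simp [hx]⟩

lemma expansion_mem {x x' : List ℝ} (h : IsExpansion x x') : ∀ a ∈ x', a ∈ x := by
  induction x generalizing x' with
  | nil => rw [expansion_nil h]; simp
  | cons c t ih =>
    obtain ⟨k, x'', hk, hexp, rfl⟩ := expansion_cons h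
    intro a ha
    rcases List.mem_append.1 ha with ha | ha
    · rw [List.eq_of_mem_replicate ha]; simp
    · exact List.mem_cons_of_mem _ (ih hexp a ha)

lemma expansion_count {x x' : List ℝ} (h : IsExpansion x x') (a : ℝ) :
    x.count a ≤ x'.count a := by
  induction x generalizing x' with
  | nil => rw [expansion_nil h]
  | cons c t ih =>
    obtain ⟨k, x'', hk, hexp, rfl⟩ := expansion_cons h
    rw [List.count_append, List.count_cons, List.count_replicate]
    have := ih hexp
    by_cases hac : c = a
    · simp only [hac, beq_self_eq_true, if_pos]
      omega
    · simp only [beq_eq_false_iff_ne.2 hac, if_neg]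
      simpa using this

lemma expansion_self (x : List ℝ) : IsExpansion x x := by
  refine ⟨List.replicate x.length 1, by simp, by simp, ?_⟩
  induction x with
  | nil => simp
  | cons a t ih =>
    simp only [List.length_cons, List.replicate_succ, List.zipWith_cons_cons,
      List.flatten_cons, List.replicate_one, List.singleton_append]
    exact congrArg (a :: ·) ih

lemma expansion_length {x x' : List ℝ} (h : IsExpansion x x') : x.length ≤ x'.length := by
  induction x generalizing x' with
  | nil => simp
  | cons c t ih =>
    obtain ⟨k, x'', hk, hexp, rfl⟩ := expansion_cons h
    have := ih hexp
    simp only [List.length_append, List.length_replicate, List.length_cons]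
    omega

lemma sum_ge_half_count (x' y' : List ℝ) (hx : ∀ a ∈ x', a = 0 ∨ a = 1)
    (hlen : x'.length = y'.length) :
    (y'.count (1/2) : ℝ) / 2 ≤ (List.zipWith (fun a b => |a - b|) x' y').sum := by
  induction x' generalizing y' with
  | nil =>
    have : y' = [] := by simpa using hlen.symm
    simp [this]
  | cons a x' ih =>
    cases y' with
    | nil => simp at hlen
    | cons b y' =>
      simp only [List.zipWith_cons_cons, List.sum_cons, List.count_cons]
      have h1 := ih y' (fun c hc => hx c (List.mem_cons_of_mem _ hc)) (by simpa using hlen)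
      have h2 : (if b = 1/2 then (1:ℝ)/2 else 0) ≤ |a - b| := by
        by_cases hb : b = 1/2
        · subst hb
          rw [if_pos rfl]
          rcases hx a (by simp) with rfl | rfl
          · rw [abs_of_nonpos (by norm_num)]; norm_num
          · rw [abs_of_nonneg (by norm_num)]; norm_num
        · rw [if_neg hb]; exact abs_nonneg _
      by_cases hb : b = 1/2
      · rw [if_pos (beq_iff_eq.2 hb)]
        rw [if_pos hb] at h2
        push_cast
        linarith
      · rw [if_neg (by simpa using hb)]
        rw [if_neg hb] at h2
        push_cast
        linarith

lemma sum_abs_half (t : List ℝ) (ht : ∀ a ∈ t, a = 0 ∨ a = 1) :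
    (List.zipWith (fun a b => |a - b|) t (List.replicate t.length ((1:ℝ)/2))).sum
      = t.length / 2 := by
  induction t with
  | nil => simp
  | cons a t ih =>
    simp only [List.length_cons, List.replicate_succ, List.zipWith_cons_cons, List.sum_cons]
    rw [ih (fun c hc => ht c (List.mem_cons_of_mem _ hc))]
    have : |a - 1/2| = 1/2 := by
      rcases ht a (by simp) with rfl | rfl
      · rw [abs_of_nonpos (by norm_num)]; norm_num
      · rw [abs_of_nonneg (by norm_num)]; norm_num
    rw [this]; push_cast; ring

lemma count_q (ℓ : ℕ) :
    List.count ((1:ℝ)/2) (0 :: List.replicate (ℓ - 1) ((1:ℝ)/2)) = ℓ - 1 := by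
  rw [List.count_cons, List.count_replicate]
  norm_num

lemma key_lb (ℓ : ℕ) (hℓ : 1 ≤ ℓ) (s x' y' : List ℝ)
    (hbin : ∀ c ∈ s, c = 0 ∨ c = 1) (hx : IsExpansion s x')
    (hy : IsExpansion (0 :: List.replicate (ℓ - 1) ((1:ℝ)/2)) y')
    (hl : x'.length = y'.length) :
    ((ℓ:ℝ) - 1)/2 ≤ (List.zipWith (fun a b => |a - b|) x' y').sum := by
  have hc : ℓ - 1 ≤ y'.count (1/2) := by
    have := expansion_count hy (1/2)
    rwa [count_q] at this
  have hm : ∀ a ∈ x', a = 0 ∨ a = 1 := fun a ha => hbin a (expansion_mem hx a ha)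
  have h := sum_ge_half_count x' y' hm hl
  have hcast : ((ℓ:ℝ) - 1) ≤ (y'.count (1/2) : ℝ) := by
    have : ((ℓ - 1 : ℕ) : ℝ) ≤ (y'.count (1/2) : ℝ) := by exact_mod_cast hc
    rw [Nat.cast_sub hℓ] at this
    simpa using this
  linarith

lemma key_strict (ℓ : ℕ) (hℓ : 1 ≤ ℓ) (t : List ℝ)
    (hbin : ∀ c ∈ (1:ℝ) :: t, c = 0 ∨ c = 1)
    (x' y' : List ℝ) (hx : IsExpansion ((1:ℝ) :: t) x')
    (hy : IsExpansion (0 :: List.replicate (ℓ - 1) ((1:ℝ)/2)) y')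
    (hl : x'.length = y'.length) :
    ((ℓ:ℝ) - 1)/2 + 1 ≤ (List.zipWith (fun a b => |a - b|) x' y').sum := by
  obtain ⟨k, x'', hk, hxe, rfl⟩ := expansion_cons hx
  obtain ⟨m, y'', hm, hye, rfl⟩ := expansion_cons hy
  obtain ⟨k', rfl⟩ : ∃ k', k = k' + 1 := ⟨k - 1, by omega⟩
  obtain ⟨m', rfl⟩ : ∃ m', m = m' + 1 := ⟨m - 1, by omega⟩
  rw [List.replicate_succ, List.replicate_succ (a := (0:ℝ))]
  simp only [List.cons_append, List.zipWith_cons_cons, List.sum_cons]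
  have h1 : |(1:ℝ) - 0| = 1 := by norm_num
  rw [h1]
  have hx2 : ∀ a ∈ List.replicate k' (1:ℝ) ++ x'', a = 0 ∨ a = 1 := by
    intro a ha
    rcases List.mem_append.1 ha with ha | ha
    · right; exact List.eq_of_mem_replicate ha
    · exact hbin a (List.mem_cons_of_mem _ (expansion_mem hxe a ha))
  have hl2 : (List.replicate k' (1:ℝ) ++ x'').length
      = (List.replicate m' (0:ℝ) ++ y'').length := by
    rw [List.replicate_succ, List.replicate_succ (a := (0:ℝ))] at hl
    simpa using hl
  have hc : ℓ - 1 ≤ (List.replicate m' (0:ℝ) ++ y'').count (1/2) := by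
    rw [List.count_append, List.count_replicate]
    have h2 := expansion_count hye (1/2)
    rw [List.count_replicate] at h2
    norm_num at h2 ⊢
    omega
  have h := sum_ge_half_count _ _ hx2 hl2
  have hcast : ((ℓ:ℝ) - 1) ≤ ((List.replicate m' (0:ℝ) ++ y'').count (1/2) : ℝ) := by
    have : ((ℓ - 1 : ℕ) : ℝ) ≤ _ := Nat.cast_le.2 hc
    rw [Nat.cast_sub hℓ] at this
    simpa using this
  linarith


/-- For a binary sequence `s` of length `ℓ ≥ 2` and the query
`q = 0 (1/2)^(ℓ-1)`, we have `d_DTW(s,q) ≥ (ℓ-1)/2`, with equality iff `s[1] = 0`. -/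
theorem dtw_zero_then_halves_query
    (ℓ : ℕ) (hℓ : 2 ≤ ℓ) (s : List ℝ) (hlen : s.length = ℓ)
    (hbin : ∀ c ∈ s, c = 0 ∨ c = 1) :
    let q : List ℝ := 0 :: List.replicate (ℓ - 1) ((1 : ℝ) / 2)
    (ℓ - 1 : ℝ) / 2 ≤ dtw s q ∧
      (dtw s q = (ℓ - 1 : ℝ) / 2 ↔ s.headD 0 = 0) := by
  intro q
  have hℓ1 : 1 ≤ ℓ := by omega
  have hq_len : q.length = ℓ := by
    simp only [q, List.length_cons, List.length_replicate]; omega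
  obtain ⟨a, t, rfl⟩ : ∃ a t, s = a :: t := by
    cases s with
    | nil => simp at hlen; omega
    | cons a t => exact ⟨a, t, rfl⟩
  set S : Set ℝ := { c | ∃ x' y', IsExpansion (a :: t) x' ∧ IsExpansion q y' ∧
      x'.length = y'.length ∧
      c = (List.zipWith (fun a b => |a - b|) x' y').sum } with hSdef
  have hdtw : dtw (a :: t) q = sInf S := rfl
  have hc₀ : (List.zipWith (fun a b => |a - b|) (a :: t) q).sum ∈ S :=
    ⟨a :: t, q, expansion_self _, expansion_self _, by rw [hlen, hq_len], rfl⟩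
  have hlb : ∀ c ∈ S, ((ℓ:ℝ) - 1)/2 ≤ c := by
    rintro c ⟨x', y', hx, hy, hl, rfl⟩
    exact key_lb ℓ hℓ1 (a :: t) x' y' hbin hx hy hl
  have hbdd : BddBelow S := ⟨((ℓ:ℝ) - 1)/2, hlb⟩
  have hne : S.Nonempty := ⟨_, hc₀⟩
  have hge : ((ℓ:ℝ) - 1)/2 ≤ sInf S := le_csInf hne hlb
  refine ⟨by rw [hdtw]; exact hge, ?_, ?_⟩
  · intro heq
    rcases hbin a (by simp) with h0 | h1
    · simpa using h0
    · exfalso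
      subst h1
      have hlb' : ∀ c ∈ S, ((ℓ:ℝ) - 1)/2 + 1 ≤ c := by
        rintro c ⟨x', y', hx, hy, hl, rfl⟩
        exact key_strict ℓ hℓ1 t hbin x' y' hx hy hl
      have := le_csInf hne hlb'
      rw [hdtw] at heq
      linarith
  · intro h0
    have ha : a = 0 := by simpa using h0
    subst ha
    have hval : (List.zipWith (fun a b => |a - b|) ((0:ℝ) :: t) q).sum = ((ℓ:ℝ) - 1)/2 := by
      have hts : t.length = ℓ - 1 := by simp at hlen; omega
      simp only [q, List.zipWith_cons_cons, List.sum_cons, sub_zero, abs_zero]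
      rw [← hts, sum_abs_half t (fun c hc => hbin c (List.mem_cons_of_mem _ hc))]
      rw [hts, Nat.cast_sub hℓ1]
      norm_num
    have hle : sInf S ≤ ((ℓ:ℝ) - 1)/2 := by
      rw [← hval]; exact csInf_le hbdd hc₀
    rw [hdtw]
    linarith
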